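/- arXiv:cond-mat/0302401 — 2 statements merged into one kernel-verified Lean document; each statement's English description precedes it below -/
import Mathlib

section
/- Let β > 0, α ≥ 0 and let J be a symmetric random variable with |J| ≤ 1 a.s. Suppose 2α·E[tanh²(βJ)] < 1 (the annealed region). Then the only symmetric real random variable g satisfying the distributional fixed-point equation g =_d Σ_{ℓ=1}^{ξ_{2α}} (1/β)·arctanh(tanh(βJ_ℓ)·tanh(βg_ℓ)) is the degenerate one, g = 0 almost surely. -/
noncomputable section

open MeasureTheory ProbabilityTheory
open scoped Nat

/-- The inverse hyperbolic tangent. -/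
def artanh (x : ℝ) : ℝ := (1 / 2) * Real.log ((1 + x) / (1 - x))

/-- Index type for the random variables entering the replica symmetric
fixed-point equation: the Poisson counter, the couplings and the effective fields. -/
inductive FPIdx : Type
  | count : FPIdx
  | coupling (ℓ : ℕ) : FPIdx
  | field (ℓ : ℕ) : FPIdx

/-- Value type of each variable. -/
def FPIdxType : FPIdx → Type
  | .count => ℕ
  | .coupling _ => ℝ
  | .field _ => ℝ

/-- Measurable space structure on the value types. -/
def FPIdxMS : ∀ idx : FPIdx, MeasurableSpace (FPIdxType idx)
  | .count => inferInstanceAs (MeasurableSpace ℕ)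
  | .coupling _ => inferInstanceAs (MeasurableSpace ℝ)
  | .field _ => inferInstanceAs (MeasurableSpace ℝ)

/-- The full family of variables, seen as one dependent family. -/
def fpFam {Ω : Type} (ξ : Ω → ℕ) (Jv gv : ℕ → Ω → ℝ) :
    ∀ idx : FPIdx, Ω → FPIdxType idx
  | .count => ξ
  | .coupling ℓ => Jv ℓ
  | .field ℓ => gv ℓ



lemma abs_sinh_lt_cosh (x : ℝ) : |Real.sinh x| < Real.cosh x := by
  nlinarith [Real.cosh_sq x, Real.cosh_pos x, abs_nonneg (Real.sinh x), sq_abs (Real.sinh x)]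

lemma abs_tanh_lt_one (x : ℝ) : |Real.tanh x| < 1 := by
  rw [Real.tanh_eq_sinh_div_cosh, abs_div, abs_of_pos (Real.cosh_pos x),
    div_lt_one (Real.cosh_pos x)]
  exact abs_sinh_lt_cosh x

lemma tanh_sq_le_one (x : ℝ) : Real.tanh x ^ 2 ≤ 1 := by
  nlinarith [abs_tanh_lt_one x, abs_nonneg (Real.tanh x), sq_abs (Real.tanh x)]

lemma measurable_tanh : Measurable Real.tanh := by
  have : Real.tanh = fun x => Real.sinh x / Real.cosh x := funext Real.tanh_eq_sinh_div_cosh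
  rw [this]
  exact (Real.continuous_sinh.div Real.continuous_cosh
    (fun x => (Real.cosh_pos x).ne')).measurable

lemma measurable_artanh : Measurable artanh := by
  unfold artanh
  exact (measurable_const.mul ((Real.measurable_log.comp
    ((measurable_const.add measurable_id).div (measurable_const.sub measurable_id)))))

lemma artanh_neg (x : ℝ) : artanh (-x) = - artanh x := by
  unfold artanh
  rw [show (1 + -x) / (1 - -x) = ((1+x)/(1-x))⁻¹ by rw [inv_div]; ring_nf, Real.log_inv]
  ring

lemma tanh_artanh {x : ℝ} (h : |x| < 1) : Real.tanh (artanh x) = x := by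
  obtain ⟨h1, h2⟩ := abs_lt.1 h
  have hx1 : 0 < 1 - x := by linarith
  have hx2 : 0 < 1 + x := by linarith
  have hu : 0 < (1 + x) / (1 - x) := div_pos hx2 hx1
  have he : Real.exp (artanh x) * Real.exp (artanh x) = (1 + x) / (1 - x) := by
    rw [← Real.exp_add, artanh, show (1/2 : ℝ) * Real.log ((1+x)/(1-x)) +
      (1/2) * Real.log ((1+x)/(1-x)) = Real.log ((1+x)/(1-x)) by ring, Real.exp_log hu]
  rw [Real.tanh_eq_sinh_div_cosh, Real.sinh_eq, Real.cosh_eq, Real.exp_neg]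
  have hep := Real.exp_pos (artanh x)
  have he2 : Real.exp (artanh x) * Real.exp (artanh x) * (1 - x) = 1 + x := by
    rw [he]; field_simp
  rw [div_eq_iff (by positivity)]
  field_simp
  nlinarith [he2]

lemma tanh_add' (x y : ℝ) : Real.tanh (x + y)
    = (Real.tanh x + Real.tanh y) / (1 + Real.tanh x * Real.tanh y) := by
  have hx := Real.cosh_pos x
  have hy := Real.cosh_pos y
  have hxy := Real.cosh_pos (x + y)
  rw [Real.tanh_eq_sinh_div_cosh, Real.tanh_eq_sinh_div_cosh, Real.tanh_eq_sinh_div_cosh,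
    Real.sinh_add, Real.cosh_add]
  rw [Real.cosh_add] at hxy
  field_simp

lemma core_alg {a b : ℝ} (ha : |a| < 1) (hb : |b| < 1) :
    ((a + b) / (1 + a * b)) ^ 2 + ((a - b) / (1 - a * b)) ^ 2 ≤ 2 * (a ^ 2 + b ^ 2) := by
  obtain ⟨ha1, ha2⟩ := abs_lt.1 ha
  obtain ⟨hb1, hb2⟩ := abs_lt.1 hb
  have h1 : 0 < 1 + a * b := by nlinarith
  have h2 : 0 < 1 - a * b := by nlinarith
  have hA : (0:ℝ) ≤ 1 - a ^ 2 := by nlinarith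
  have hB : (0:ℝ) ≤ 1 - b ^ 2 := by nlinarith
  have hD : 0 ≤ 2 * (a ^ 2 * b ^ 2) *
      ((a ^ 2 + b ^ 2 - 2) ^ 2 + (1 - a ^ 2) * (1 - b ^ 2) * (a ^ 2 + b ^ 2)) := by
    apply mul_nonneg (by positivity)
    exact add_nonneg (sq_nonneg _) (mul_nonneg (mul_nonneg hA hB) (by positivity))
  rw [div_pow, div_pow, div_add_div _ _ (by positivity) (by positivity),
    div_le_iff₀ (by positivity)]
  nlinarith [hD]

lemma tanh_sq_add_sub (x y : ℝ) :
    Real.tanh (x + y) ^ 2 + Real.tanh (x - y) ^ 2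
      ≤ 2 * (Real.tanh x ^ 2 + Real.tanh y ^ 2) := by
  have h := core_alg (abs_tanh_lt_one x) (abs_tanh_lt_one y)
  rw [tanh_add' x y, show x - y = x + (-y) by ring, tanh_add' x (-y), Real.tanh_neg] at *
  convert h using 3 <;> ring

lemma tanh_eq_zero {t : ℝ} (h : Real.tanh t = 0) : t = 0 := by
  rw [Real.tanh_eq_sinh_div_cosh, div_eq_zero_iff] at h
  have hs : Real.sinh t = 0 := h.resolve_right (Real.cosh_pos t).ne'
  rw [Real.sinh_eq] at hs
  have h1 : Real.exp t - Real.exp (-t) = 0 := by linarith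
  have h2 : t = -t := Real.exp_injective (sub_eq_zero.1 h1)
  linarith
lemma integrable_of_bdd {α : Type*} [MeasurableSpace α] {μ : Measure α} [IsFiniteMeasure μ]
    {f : α → ℝ} {C : ℝ} (hf : AEStronglyMeasurable f μ) (h : ∀ x, |f x| ≤ C) :
    Integrable f μ :=
  Integrable.mono' (integrable_const C) hf (Filter.Eventually.of_forall fun x => by
    simpa using h x)

lemma tanh_sq_abs_le (x : ℝ) : |Real.tanh x ^ 2| ≤ 1 := by
  rw [abs_of_nonneg (sq_nonneg _)]; exact tanh_sq_le_one x

lemma key_law (μ ν : Measure ℝ) [IsProbabilityMeasure μ] [IsProbabilityMeasure ν]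
    (hν : Measure.map (fun x => -x) ν = ν) :
    ∫ p : ℝ × ℝ, Real.tanh (p.1 + p.2) ^ 2 ∂(μ.prod ν)
      ≤ (∫ x, Real.tanh x ^ 2 ∂μ) + ∫ x, Real.tanh x ^ 2 ∂ν := by
  have hm1 : Measurable fun p : ℝ × ℝ => Real.tanh (p.1 + p.2) ^ 2 :=
    (measurable_tanh.comp (measurable_fst.add measurable_snd)).pow_const 2
  have hm2 : Measurable fun p : ℝ × ℝ => Real.tanh (p.1 - p.2) ^ 2 :=
    (measurable_tanh.comp (measurable_fst.sub measurable_snd)).pow_const 2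
  have hmap : (μ.prod ν).map (Prod.map id (fun x : ℝ => -x)) = μ.prod ν := by
    rw [← Measure.map_prod_map _ _ measurable_id measurable_neg, Measure.map_id, hν]
  have hflip : ∫ p : ℝ × ℝ, Real.tanh (p.1 + p.2) ^ 2 ∂(μ.prod ν)
      = ∫ p : ℝ × ℝ, Real.tanh (p.1 - p.2) ^ 2 ∂(μ.prod ν) := by
    conv_lhs => rw [← hmap]
    rw [integral_map (measurable_id.prodMap measurable_neg).aemeasurable
      hm1.aestronglyMeasurable]
    simp [Prod.map, sub_eq_add_neg]
  have hint1 : Integrable (fun p : ℝ × ℝ => Real.tanh (p.1 + p.2) ^ 2) (μ.prod ν) :=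
    integrable_of_bdd hm1.aestronglyMeasurable (fun x => tanh_sq_abs_le _)
  have hint2 : Integrable (fun p : ℝ × ℝ => Real.tanh (p.1 - p.2) ^ 2) (μ.prod ν) :=
    integrable_of_bdd hm2.aestronglyMeasurable (fun x => tanh_sq_abs_le _)
  have hintf : Integrable (fun p : ℝ × ℝ => Real.tanh p.1 ^ 2) (μ.prod ν) :=
    integrable_of_bdd ((measurable_tanh.comp measurable_fst).pow_const 2).aestronglyMeasurable
      (fun x => tanh_sq_abs_le _)
  have hints : Integrable (fun p : ℝ × ℝ => Real.tanh p.2 ^ 2) (μ.prod ν) :=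
    integrable_of_bdd ((measurable_tanh.comp measurable_snd).pow_const 2).aestronglyMeasurable
      (fun x => tanh_sq_abs_le _)
  have hfst : ∫ p : ℝ × ℝ, Real.tanh p.1 ^ 2 ∂(μ.prod ν) = ∫ x, Real.tanh x ^ 2 ∂μ := by
    have h : Measure.map Prod.fst (μ.prod ν) = μ := by
      rw [Measure.map_fst_prod]; simp
    have h2 := integral_map (μ := μ.prod ν) measurable_fst.aemeasurable
      (f := fun x : ℝ => Real.tanh x ^ 2) (measurable_tanh.pow_const 2).aestronglyMeasurable
    rw [h] at h2
    exact h2.symm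
  have hsnd : ∫ p : ℝ × ℝ, Real.tanh p.2 ^ 2 ∂(μ.prod ν) = ∫ x, Real.tanh x ^ 2 ∂ν := by
    have h : Measure.map Prod.snd (μ.prod ν) = ν := by
      rw [Measure.map_snd_prod]; simp
    have h2 := integral_map (μ := μ.prod ν) measurable_snd.aemeasurable
      (f := fun x : ℝ => Real.tanh x ^ 2) (measurable_tanh.pow_const 2).aestronglyMeasurable
    rw [h] at h2
    exact h2.symm
  have hmono : ∫ p : ℝ × ℝ, (Real.tanh (p.1 + p.2) ^ 2 + Real.tanh (p.1 - p.2) ^ 2) ∂(μ.prod ν)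
      ≤ ∫ p : ℝ × ℝ, 2 * (Real.tanh p.1 ^ 2 + Real.tanh p.2 ^ 2) ∂(μ.prod ν) :=
    integral_mono (hint1.add hint2) ((hintf.add hints).const_mul 2)
      (fun p => tanh_sq_add_sub p.1 p.2)
  rw [integral_add hint1 hint2] at hmono
  rw [integral_const_mul, integral_add hintf hints, hfst, hsnd] at hmono
  rw [hflip] at hmono ⊢
  linarith [hmono, hflip.symm]

lemma key_rv {Ω : Type} [MeasureSpace Ω] [IsProbabilityMeasure (ℙ : Measure Ω)]
    {X Y : Ω → ℝ} (hX : Measurable X) (hY : Measurable Y)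
    (hind : IndepFun X Y ℙ)
    (hsym : Measure.map (fun x : ℝ => -x) (Measure.map Y ℙ) = Measure.map Y ℙ) :
    ∫ ω, Real.tanh (X ω + Y ω) ^ 2 ∂ℙ
      ≤ (∫ ω, Real.tanh (X ω) ^ 2 ∂ℙ) + ∫ ω, Real.tanh (Y ω) ^ 2 ∂ℙ := by
  have hmap := (indepFun_iff_map_prod_eq_prod_map_map hX.aemeasurable hY.aemeasurable).1 hind
  have h1 : IsProbabilityMeasure (Measure.map X ℙ) := Measure.isProbabilityMeasure_map hX.aemeasurable
  have h2 : IsProbabilityMeasure (Measure.map Y ℙ) := Measure.isProbabilityMeasure_map hY.aemeasurable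
  have e1 : ∫ ω, Real.tanh (X ω + Y ω) ^ 2 ∂ℙ
      = ∫ p : ℝ × ℝ, Real.tanh (p.1 + p.2) ^ 2 ∂((Measure.map X ℙ).prod (Measure.map Y ℙ)) := by
    rw [← hmap]
    exact (integral_map (hX.prodMk hY).aemeasurable
      (f := fun p : ℝ × ℝ => Real.tanh (p.1 + p.2) ^ 2)
      ((measurable_tanh.comp (measurable_fst.add measurable_snd)).pow_const
        2).aestronglyMeasurable).symm
  have e2 : ∫ ω, Real.tanh (X ω) ^ 2 ∂ℙ = ∫ x, Real.tanh x ^ 2 ∂(Measure.map X ℙ) := by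
    rw [integral_map hX.aemeasurable (measurable_tanh.pow_const 2).aestronglyMeasurable]
  have e3 : ∫ ω, Real.tanh (Y ω) ^ 2 ∂ℙ = ∫ x, Real.tanh x ^ 2 ∂(Measure.map Y ℙ) := by
    rw [integral_map hY.aemeasurable (measurable_tanh.pow_const 2).aestronglyMeasurable]
  rw [e1, e2, e3]
  exact key_law _ _ hsym

lemma poisson_partial (lam : ℝ) : ∀ N : ℕ, ∑ n ∈ Finset.range (N+1), (n : ℝ) * (lam ^ n / n !)
    = lam * ∑ k ∈ Finset.range N, lam ^ k / k ! := by
  intro N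
  induction N with
  | zero => simp
  | succ N ih =>
      rw [Finset.sum_range_succ, ih, Finset.sum_range_succ (n := N), mul_add]
      congr 1
      rw [Nat.factorial_succ]
      push_cast
      have h1 : (0:ℝ) < (N:ℝ) + 1 := by positivity
      have h2 : (0:ℝ) < (N ! : ℝ) := by exact_mod_cast Nat.factorial_pos N
      field_simp
      ring

lemma poisson_mean_le {lam : ℝ} (h : 0 ≤ lam) :
    ∑' n : ℕ, (n : ℝ) * (Real.exp (-lam) * lam ^ n / n !) ≤ lam := by
  apply Real.tsum_le_of_sum_range_le (fun n => by positivity)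
  intro N
  have hsub : ∑ n ∈ Finset.range N, (n : ℝ) * (Real.exp (-lam) * lam ^ n / n !)
      ≤ ∑ n ∈ Finset.range (N+1), (n : ℝ) * (Real.exp (-lam) * lam ^ n / n !) :=
    Finset.sum_le_sum_of_subset_of_nonneg
      (Finset.range_subset_range.2 (Nat.le_succ N)) (fun n _ _ => by positivity)
  have heq : ∑ n ∈ Finset.range (N+1), (n : ℝ) * (Real.exp (-lam) * lam ^ n / n !)
      = Real.exp (-lam) * ∑ n ∈ Finset.range (N+1), (n : ℝ) * (lam ^ n / n !) := by
    rw [Finset.mul_sum]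
    exact Finset.sum_congr rfl (fun n _ => by ring)
  have hb : ∑ k ∈ Finset.range N, lam ^ k / k ! ≤ Real.exp lam := Real.sum_le_exp_of_nonneg h N
  calc ∑ n ∈ Finset.range N, (n : ℝ) * (Real.exp (-lam) * lam ^ n / n !)
      ≤ Real.exp (-lam) * (lam * ∑ k ∈ Finset.range N, lam ^ k / k !) := by
        rw [← poisson_partial lam N, ← heq]; exact hsub
    _ ≤ Real.exp (-lam) * (lam * Real.exp lam) := by
        apply mul_le_mul_of_nonneg_left _ (Real.exp_nonneg _)
        exact mul_le_mul_of_nonneg_left hb h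
    _ = lam := by rw [Real.exp_neg]; field_simp

lemma summable_n_pow_div {lam : ℝ} (h : 0 ≤ lam) :
    Summable (fun n : ℕ => (n : ℝ) * (lam ^ n / n !)) := by
  apply Summable.of_nonneg_of_le (fun n => by positivity)
    (fun n => ?_) (Real.summable_pow_div_factorial (2 * lam))
  have h2 : (n : ℝ) ≤ 2 ^ n := by exact_mod_cast (Nat.lt_two_pow_self (n := n)).le
  calc (n : ℝ) * (lam ^ n / n !) ≤ 2 ^ n * (lam ^ n / n !) := by
        apply mul_le_mul_of_nonneg_right h2 (by positivity)
    _ = (2 * lam) ^ n / n ! := by rw [mul_pow]; ring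

deriving instance DecidableEq for FPIdx

/-- **Uniqueness of the replica symmetric fixed point in the annealed region.**
Let `β > 0`, `α ≥ 0`, let `ρJ` be the law of a symmetric coupling `J` with `|J| ≤ 1`
a.s., and assume `2α E[tanh²(βJ)] < 1`.  If a symmetric law `ρg` satisfies the
distributional fixed-point equation
`g =_d Σ_{ℓ<ξ_{2α}} (1/β) artanh(tanh(βJ_ℓ) tanh(βg_ℓ))`
(realized on some probability space with `ξ_{2α}` Poisson of mean `2α`,
`(J_ℓ)` i.i.d. with law `ρJ`, `(g_ℓ)` i.i.d. with law `ρg`, all mutually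
independent), then `ρg` is the Dirac mass at `0`, i.e. `g = 0` almost surely. -/
theorem replica_symmetric_fixed_point_unique
    (β α : ℝ) (hβ : 0 < β) (hα : 0 ≤ α)
    (ρJ ρg : Measure ℝ) [IsProbabilityMeasure ρJ] [IsProbabilityMeasure ρg]
    (hJsymm : Measure.map (fun x => -x) ρJ = ρJ)
    (hJbdd : ∀ᵐ x ∂ρJ, |x| ≤ 1)
    (hgsymm : Measure.map (fun x => -x) ρg = ρg)
    (hann : 2 * α * ∫ x, Real.tanh (β * x) ^ 2 ∂ρJ < 1)
    (Ω : Type) [MeasureSpace Ω] [IsProbabilityMeasure (ℙ : Measure Ω)]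
    (ξ : Ω → ℕ) (Jv gv : ℕ → Ω → ℝ)
    (measξ : Measurable ξ)
    (measJ : ∀ ℓ, Measurable (Jv ℓ))
    (measg : ∀ ℓ, Measurable (gv ℓ))
    (hξ : ∀ k : ℕ, (ℙ : Measure Ω) (ξ ⁻¹' {k})
      = ENNReal.ofReal (Real.exp (-(2 * α)) * (2 * α) ^ k / (Nat.factorial k)))
    (hJ : ∀ ℓ, Measure.map (Jv ℓ) (ℙ : Measure Ω) = ρJ)
    (hg : ∀ ℓ, Measure.map (gv ℓ) (ℙ : Measure Ω) = ρg)
    (hindep : iIndepFun (m := FPIdxMS) (fpFam ξ Jv gv) (ℙ : Measure Ω))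
    (hfix : Measure.map
        (fun ω => ∑ ℓ ∈ Finset.range (ξ ω),
          β⁻¹ * artanh (Real.tanh (β * Jv ℓ ω) * Real.tanh (β * gv ℓ ω)))
        (ℙ : Measure Ω) = ρg) :
    ρg = Measure.dirac 0 := by
  letI : ∀ i : FPIdx, MeasurableSpace (FPIdxType i) := FPIdxMS
  -- basic notation
  set lam : ℝ := 2 * α with hlam_def
  have hlam : 0 ≤ lam := by positivity
  set c0 : ℝ := ∫ x, Real.tanh (β * x) ^ 2 ∂ρJ with hc0_def
  set m : ℝ := ∫ x, Real.tanh (β * x) ^ 2 ∂ρg with hm_def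
  have hmeas_tsq : Measurable fun x : ℝ => Real.tanh (β * x) ^ 2 :=
    (measurable_tanh.comp (measurable_id.const_mul β)).pow_const 2
  have hc0_nonneg : 0 ≤ c0 := integral_nonneg fun x => sq_nonneg _
  have hm_nonneg : 0 ≤ m := integral_nonneg fun x => sq_nonneg _
  -- the increments
  set Fu : ℝ × ℝ → ℝ :=
    fun p => β⁻¹ * artanh (Real.tanh (β * p.1) * Real.tanh (β * p.2)) with hFu_def
  have hmeasFu : Measurable Fu :=
    (measurable_artanh.comp
      ((measurable_tanh.comp (measurable_fst.const_mul β)).mul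
        (measurable_tanh.comp (measurable_snd.const_mul β)))).const_mul β⁻¹
  set u : ℕ → Ω → ℝ := fun ℓ ω => Fu (Jv ℓ ω, gv ℓ ω) with hu_def
  have hmeasu : ∀ ℓ, Measurable (u ℓ) := fun ℓ => hmeasFu.comp ((measJ ℓ).prodMk (measg ℓ))
  set S : ℕ → Ω → ℝ := fun n ω => ∑ ℓ ∈ Finset.range n, u ℓ ω with hS_def
  have hmeasS : ∀ n, Measurable (S n) := fun n => Finset.measurable_sum _ fun ℓ _ => hmeasu ℓ
  have hFuodd : ∀ p : ℝ × ℝ, Fu (-p.1, p.2) = - Fu p := by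
    intro p
    have h : Real.tanh (β * -p.1) * Real.tanh (β * p.2)
        = -(Real.tanh (β * p.1) * Real.tanh (β * p.2)) := by
      rw [mul_neg, Real.tanh_neg]; ring
    simp only [hFu_def]
    rw [h, artanh_neg]
    ring
  have htanhFu : ∀ p : ℝ × ℝ, Real.tanh (β * Fu p)
      = Real.tanh (β * p.1) * Real.tanh (β * p.2) := by
    intro p
    have h1 := abs_tanh_lt_one (β * p.1)
    have h2 := abs_tanh_lt_one (β * p.2)
    have habs : |Real.tanh (β * p.1) * Real.tanh (β * p.2)| < 1 := by
      rw [abs_mul]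
      nlinarith [abs_nonneg (Real.tanh (β * p.1)), abs_nonneg (Real.tanh (β * p.2))]
    have : β * Fu p = artanh (Real.tanh (β * p.1) * Real.tanh (β * p.2)) := by
      rw [hFu_def]
      field_simp
    rw [this, tanh_artanh habs]
  -- independence facts
  have hmeasFam : ∀ i, Measurable (fpFam ξ Jv gv i) := by
    intro i
    cases i with
    | count => exact measξ
    | coupling ℓ => exact measJ ℓ
    | field ℓ => exact measg ℓ
  -- index finsets
  set Tset : ℕ → Finset FPIdx :=
    fun n => (Finset.range n).image FPIdx.coupling ∪ (Finset.range n).image FPIdx.field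
    with hTset_def
  have hmemc : ∀ {n ℓ : ℕ}, ℓ ∈ Finset.range n → FPIdx.coupling ℓ ∈ Tset n := fun h =>
    Finset.mem_union_left _ (Finset.mem_image_of_mem _ h)
  have hmemf : ∀ {n ℓ : ℕ}, ℓ ∈ Finset.range n → FPIdx.field ℓ ∈ Tset n := fun h =>
    Finset.mem_union_right _ (Finset.mem_image_of_mem _ h)
  -- S n as a function of the variables indexed by Tset n
  set Φ : ∀ n : ℕ, (∀ i : (Tset n : Finset FPIdx), FPIdxType i) → ℝ :=
    fun n v => ∑ ℓ ∈ (Finset.range n).attach,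
      Fu (v ⟨FPIdx.coupling ℓ.1, hmemc ℓ.2⟩, v ⟨FPIdx.field ℓ.1, hmemf ℓ.2⟩) with hΦ_def
  have hmeasΦ : ∀ n, Measurable (Φ n) := by
    intro n
    apply Finset.measurable_sum
    intro ℓ _
    exact hmeasFu.comp ((measurable_pi_apply _).prodMk (measurable_pi_apply _))
  have hSΦ : ∀ n, S n = fun ω => Φ n (fun i => fpFam ξ Jv gv i.1 ω) := by
    intro n
    funext ω
    rw [hS_def, hΦ_def]
    simp only
    rw [← Finset.sum_attach (Finset.range n) (fun ℓ => u ℓ ω)]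
    rfl
  have hindep_S_u : ∀ n, IndepFun (S n) (u n) ℙ := by
    intro n
    have hdisj : Disjoint (Tset n) (insert (FPIdx.coupling n) {FPIdx.field n} : Finset FPIdx) := by
      simp only [hTset_def, Finset.disjoint_left, Finset.mem_union, Finset.mem_image,
        Finset.mem_range, Finset.mem_insert, Finset.mem_singleton]
      rintro i (⟨ℓ, hℓ, rfl⟩ | ⟨ℓ, hℓ, rfl⟩) <;> rintro (h | h) <;> simp_all <;> omega
    set Pn : Finset FPIdx := insert (FPIdx.coupling n) {FPIdx.field n} with hPn_def
    have hIF := hindep.indepFun_finset (Tset n) Pn hdisj hmeasFam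
    have hmem1 : FPIdx.coupling n ∈ Pn := by simp [hPn_def]
    have hmem2 : FPIdx.field n ∈ Pn := by simp [hPn_def]
    have hψmeas : Measurable (fun v : (∀ i : Pn, FPIdxType i.1) =>
        Fu (v ⟨FPIdx.coupling n, hmem1⟩, v ⟨FPIdx.field n, hmem2⟩)) :=
      hmeasFu.comp ((measurable_pi_apply _).prodMk (measurable_pi_apply _))
    have hcomp := hIF.comp (hmeasΦ n) hψmeas
    rw [hSΦ n]
    exact hcomp
  have hindep_ξ_S : ∀ n, IndepFun ξ (S n) ℙ := by
    intro n
    have hdisj : Disjoint ({FPIdx.count} : Finset FPIdx) (Tset n) := by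
      simp only [hTset_def, Finset.disjoint_left, Finset.mem_union, Finset.mem_image,
        Finset.mem_range, Finset.mem_singleton]
      rintro i rfl (⟨ℓ, hℓ, h⟩ | ⟨ℓ, hℓ, h⟩) <;> simp_all
    have hIF := hindep.indepFun_finset {FPIdx.count} (Tset n) hdisj hmeasFam
    have hmem0 : FPIdx.count ∈ ({FPIdx.count} : Finset FPIdx) := by simp
    have hφmeas : Measurable (fun v : (∀ i : ({FPIdx.count} : Finset FPIdx), FPIdxType i.1) =>
        v ⟨FPIdx.count, hmem0⟩) := measurable_pi_apply _
    have hcomp := hIF.comp hφmeas (hmeasΦ n)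
    rw [hSΦ n]
    exact hcomp
  have hindep_J_g : ∀ n, IndepFun (Jv n) (gv n) ℙ := by
    intro n
    exact hindep.indepFun (i := FPIdx.coupling n) (j := FPIdx.field n) (by simp)
  -- law of the pair (J_n, g_n) and of u n
  have hpair : ∀ n, Measure.map (fun ω => (Jv n ω, gv n ω)) ℙ = ρJ.prod ρg := by
    intro n
    rw [← hJ n, ← hg n]
    exact (indepFun_iff_map_prod_eq_prod_map_map (measJ n).aemeasurable
      (measg n).aemeasurable).1 (hindep_J_g n)
  have hlawu : ∀ n, Measure.map (u n) ℙ = Measure.map Fu (ρJ.prod ρg) := by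
    intro n
    rw [← hpair n, Measure.map_map hmeasFu ((measJ n).prodMk (measg n))]
    rfl
  have hmulβ : Measurable (fun x : ℝ => β * x) := by fun_prop
  have hsymu : Measure.map (fun x : ℝ => -x) (Measure.map Fu (ρJ.prod ρg))
      = Measure.map Fu (ρJ.prod ρg) := by
    rw [Measure.map_map measurable_neg hmeasFu]
    have h1 : ((fun x : ℝ => -x) ∘ Fu) = Fu ∘ (Prod.map (fun x : ℝ => -x) id) := by
      funext p
      simp only [Function.comp_apply, Prod.map_apply, id_eq]
      exact (hFuodd p).symm
    rw [h1, ← Measure.map_map hmeasFu (measurable_neg.prodMap measurable_id),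
      ← Measure.map_prod_map _ _ measurable_neg measurable_id, hJsymm, Measure.map_id]
  have hsymβu : ∀ n, Measure.map (fun x : ℝ => -x) (Measure.map (fun ω => β * u n ω) ℙ)
      = Measure.map (fun ω => β * u n ω) ℙ := by
    intro n
    have h1 : Measure.map (fun ω => β * u n ω) ℙ
        = Measure.map (fun x : ℝ => β * x) (Measure.map Fu (ρJ.prod ρg)) := by
      rw [← hlawu n, Measure.map_map hmulβ (hmeasu n)]
      rfl
    rw [h1, Measure.map_map measurable_neg hmulβ,
      show ((fun x : ℝ => -x) ∘ fun x : ℝ => β * x)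
        = ((fun x : ℝ => β * x) ∘ fun x : ℝ => -x) by funext x; show -(β * x) = β * -x; ring,
      ← Measure.map_map hmulβ measurable_neg, hsymu]
  -- the one-step integral
  have hq : ∀ n, ∫ ω, Real.tanh (β * u n ω) ^ 2 ∂ℙ = c0 * m := by
    intro n
    have h1 : ∀ ω, Real.tanh (β * u n ω) ^ 2
        = Real.tanh (β * Jv n ω) ^ 2 * Real.tanh (β * gv n ω) ^ 2 := by
      intro ω
      rw [show Real.tanh (β * u n ω) = Real.tanh (β * Jv n ω) * Real.tanh (β * gv n ω)
        from htanhFu (Jv n ω, gv n ω)]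
      ring
    calc ∫ ω, Real.tanh (β * u n ω) ^ 2 ∂ℙ
        = ∫ ω, Real.tanh (β * Jv n ω) ^ 2 * Real.tanh (β * gv n ω) ^ 2 ∂ℙ :=
          integral_congr_ae (Filter.Eventually.of_forall h1)
      _ = (∫ ω, Real.tanh (β * Jv n ω) ^ 2 ∂ℙ) * ∫ ω, Real.tanh (β * gv n ω) ^ 2 ∂ℙ :=
          IndepFun.integral_mul_eq_mul_integral
            ((hindep_J_g n).comp hmeas_tsq hmeas_tsq)
            (integrable_of_bdd ((hmeas_tsq.comp (measJ n)).aestronglyMeasurable)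
              fun ω => tanh_sq_abs_le _).aestronglyMeasurable
            (integrable_of_bdd ((hmeas_tsq.comp (measg n)).aestronglyMeasurable)
              fun ω => tanh_sq_abs_le _).aestronglyMeasurable
      _ = c0 * m := by
          rw [hc0_def, hm_def, ← hJ n, ← hg n,
            integral_map (measJ n).aemeasurable hmeas_tsq.aestronglyMeasurable,
            integral_map (measg n).aemeasurable hmeas_tsq.aestronglyMeasurable]
  have hc0m : 0 ≤ c0 * m := mul_nonneg hc0_nonneg hm_nonneg
  -- induction on the number of summands
  set M : ℕ → ℝ := fun n => ∫ ω, Real.tanh (β * S n ω) ^ 2 ∂ℙ with hM_def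
  have hMnonneg : ∀ n, 0 ≤ M n := fun n => integral_nonneg fun ω => sq_nonneg _
  have hM : ∀ n, M n ≤ n * (c0 * m) := by
    intro n
    induction n with
    | zero => simp [hM_def, hS_def, Real.tanh_zero]
    | succ n ih =>
        have hsplit : (fun ω => Real.tanh (β * S (n+1) ω) ^ 2)
            = fun ω => Real.tanh ((β * S n ω) + (β * u n ω)) ^ 2 := by
          funext ω
          have h2 : S (n+1) ω = S n ω + u n ω := Finset.sum_range_succ (fun ℓ => u ℓ ω) n
          rw [h2, mul_add]
        have hkey := key_rv (X := fun ω => β * S n ω) (Y := fun ω => β * u n ω)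
          ((hmeasS n).const_mul β) ((hmeasu n).const_mul β)
          ((hindep_S_u n).comp (measurable_id.const_mul β) (measurable_id.const_mul β))
          (hsymβu n)
        have hstep : M (n+1) ≤ M n + c0 * m := by
          rw [hM_def]
          simp only
          rw [hsplit]
          calc ∫ ω, Real.tanh ((β * S n ω) + (β * u n ω)) ^ 2 ∂ℙ
              ≤ (∫ ω, Real.tanh (β * S n ω) ^ 2 ∂ℙ) + ∫ ω, Real.tanh (β * u n ω) ^ 2 ∂ℙ := hkey
            _ = M n + c0 * m := by rw [hq n, hM_def]
        push_cast
        nlinarith [hstep, ih]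
  -- the full Poisson sum
  set G : Ω → ℝ := fun ω => S (ξ ω) ω with hG_def
  have hGmeas : Measurable G := by
    intro B hB
    have hpre : G ⁻¹' B = ⋃ n, (ξ ⁻¹' {n}) ∩ (S n ⁻¹' B) := by
      ext ω
      simp only [Set.mem_preimage, Set.mem_iUnion, Set.mem_inter_iff, Set.mem_singleton_iff]
      constructor
      · intro h
        exact ⟨ξ ω, rfl, h⟩
      · rintro ⟨n, hn, hB'⟩
        rw [hG_def]
        simp only
        rw [hn]
        exact hB'
    rw [hpre]
    exact MeasurableSet.iUnion fun n => (measξ (measurableSet_singleton n)).inter (hmeasS n hB)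
  have hfix' : Measure.map G ℙ = ρg := hfix
  have hm_eq : m = ∫ ω, Real.tanh (β * G ω) ^ 2 ∂ℙ := by
    rw [hm_def, ← hfix', integral_map hGmeas.aemeasurable hmeas_tsq.aestronglyMeasurable]
  set p : ℕ → ℝ := fun n => (ℙ (ξ ⁻¹' {n})).toReal with hp_def
  have hp_eq : ∀ n, p n = Real.exp (-lam) * lam ^ n / n ! := by
    intro n
    rw [hp_def]
    simp only
    rw [hξ n, ENNReal.toReal_ofReal (by positivity)]
  have hp_nonneg : ∀ n, 0 ≤ p n := fun n => ENNReal.toReal_nonneg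
  have hIntG : Integrable (fun ω => Real.tanh (β * G ω) ^ 2) ℙ :=
    integrable_of_bdd ((hmeas_tsq.comp hGmeas).aestronglyMeasurable) fun ω => tanh_sq_abs_le _
  have hsets : ∀ n : ℕ, MeasurableSet (ξ ⁻¹' {n}) := fun n => measξ (measurableSet_singleton n)
  have hdecomp : m = ∑' n, p n * M n := by
    have huniv : (Set.univ : Set Ω) = ⋃ n, ξ ⁻¹' {n} := by
      ext ω; simp
    have hdisj : Pairwise (Function.onFun Disjoint fun n => ξ ⁻¹' {n}) := by
      intro i j hij
      exact Set.disjoint_left.2 fun ω hi hj => hij (by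
        rw [Set.mem_preimage, Set.mem_singleton_iff] at hi hj
        rw [← hi, ← hj])
    calc m = ∫ ω in Set.univ, Real.tanh (β * G ω) ^ 2 ∂ℙ := by
            rw [hm_eq, Measure.restrict_univ]
      _ = ∑' n, ∫ ω in ξ ⁻¹' {n}, Real.tanh (β * G ω) ^ 2 ∂ℙ := by
            rw [huniv]
            exact integral_iUnion hsets hdisj (by rw [← huniv]; exact hIntG.integrableOn)
      _ = ∑' n, p n * M n := by
            apply tsum_congr
            intro n
            have he1 : ∫ ω in ξ ⁻¹' {n}, Real.tanh (β * G ω) ^ 2 ∂ℙ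
                = ∫ ω in ξ ⁻¹' {n}, Real.tanh (β * S n ω) ^ 2 ∂ℙ := by
              apply setIntegral_congr_fun (hsets n)
              intro ω hω
              rw [Set.mem_preimage, Set.mem_singleton_iff] at hω
              rw [hG_def]
              simp only
              rw [hω]
            rw [he1]
            have hXmeas : Measurable fun ω =>
                Set.indicator ({n} : Set ℕ) (fun _ => (1:ℝ)) (ξ ω) :=
              (measurable_const.indicator (measurableSet_singleton n)).comp measξ
            have hind2 : IndepFun
                (fun ω => Set.indicator ({n} : Set ℕ) (fun _ => (1:ℝ)) (ξ ω))
                (fun ω => Real.tanh (β * S n ω) ^ 2) ℙ :=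
              (hindep_ξ_S n).comp
                (measurable_const.indicator (measurableSet_singleton n)) hmeas_tsq
            have heq2 : ∫ ω in ξ ⁻¹' {n}, Real.tanh (β * S n ω) ^ 2 ∂ℙ
                = ∫ ω, (Set.indicator ({n} : Set ℕ) (fun _ => (1:ℝ)) (ξ ω))
                    * Real.tanh (β * S n ω) ^ 2 ∂ℙ := by
              rw [← integral_indicator (hsets n)]
              congr 1
              funext ω
              by_cases h : ω ∈ ξ ⁻¹' {n}
              · rw [Set.indicator_of_mem h, Set.indicator_of_mem (by exact h), one_mul]
              · rw [Set.indicator_of_notMem h, Set.indicator_of_notMem (by exact h), zero_mul]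
            have hmul := hind2.integral_mul_eq_mul_integral
              (integrable_of_bdd (C := 1) hXmeas.aestronglyMeasurable (fun ω => by
                by_cases h : ξ ω ∈ ({n} : Set ℕ)
                · rw [Set.indicator_of_mem h]; simp
                · rw [Set.indicator_of_notMem h]; simp)).aestronglyMeasurable
              (integrable_of_bdd ((hmeas_tsq.comp (hmeasS n)).aestronglyMeasurable)
                (fun ω => tanh_sq_abs_le _)).aestronglyMeasurable
            rw [heq2,
              show (∫ ω, (Set.indicator ({n} : Set ℕ) (fun _ => (1:ℝ)) (ξ ω))
                  * Real.tanh (β * S n ω) ^ 2 ∂ℙ)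
                = (∫ ω, Set.indicator ({n} : Set ℕ) (fun _ => (1:ℝ)) (ξ ω) ∂ℙ)
                  * ∫ ω, Real.tanh (β * S n ω) ^ 2 ∂ℙ from hmul]
            congr 1
            have hind_eq : (fun ω => Set.indicator ({n} : Set ℕ) (fun _ => (1:ℝ)) (ξ ω))
                = Set.indicator (ξ ⁻¹' {n}) (fun _ => (1:ℝ)) := by
              funext ω
              by_cases h : ω ∈ ξ ⁻¹' {n}
              · rw [Set.indicator_of_mem h, Set.indicator_of_mem (by exact h)]
              · rw [Set.indicator_of_notMem h, Set.indicator_of_notMem (by exact h)]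
            rw [hind_eq, integral_indicator_const (1:ℝ) (hsets n), hp_def]
            simp [Measure.real]
  -- summability and the final bound
  set b : ℕ → ℝ := fun n => p n * ((n : ℝ) * (c0 * m)) with hb_def
  have hb_summable : Summable b := by
    have h1 : Summable (fun n : ℕ => (n : ℝ) * (lam ^ n / n !)) := summable_n_pow_div hlam
    have h2 := (h1.mul_right (c0 * m)).mul_left (Real.exp (-lam))
    apply h2.congr
    intro n
    rw [hb_def]
    simp only
    rw [hp_eq n]
    ring
  have hab : ∀ n, p n * M n ≤ b n := fun n =>
    mul_le_mul_of_nonneg_left (hM n) (hp_nonneg n)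
  have ha_summable : Summable (fun n => p n * M n) :=
    Summable.of_nonneg_of_le (fun n => mul_nonneg (hp_nonneg n) (hMnonneg n)) hab hb_summable
  have h3 : ∑' n, b n ≤ lam * (c0 * m) := by
    have h4 : ∀ n : ℕ, b n = ((n : ℝ) * (Real.exp (-lam) * lam ^ n / n !)) * (c0 * m) := by
      intro n
      rw [hb_def]
      simp only
      rw [hp_eq n]
      ring
    calc ∑' n, b n
        = (∑' n : ℕ, (n : ℝ) * (Real.exp (-lam) * lam ^ n / n !)) * (c0 * m) := by
          rw [← tsum_mul_right]
          exact tsum_congr h4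
      _ ≤ lam * (c0 * m) := mul_le_mul_of_nonneg_right (poisson_mean_le hlam) hc0m
  have hm_le : m ≤ lam * (c0 * m) :=
    hdecomp.trans_le (le_trans (Summable.tsum_le_tsum hab ha_summable hb_summable) h3)
  have hm0 : m = 0 :=
    le_antisymm (by nlinarith [hm_le, hm_nonneg, hann]) hm_nonneg
  -- conclude ρg = δ₀
  have hint_g : Integrable (fun x => Real.tanh (β * x) ^ 2) ρg :=
    integrable_of_bdd hmeas_tsq.aestronglyMeasurable fun x => tanh_sq_abs_le _
  have hae : ∀ᵐ x ∂ρg, Real.tanh (β * x) ^ 2 = 0 := by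
    have h5 := (integral_eq_zero_iff_of_nonneg (fun x => sq_nonneg _) hint_g).1 (by
      rw [← hm_def]; exact hm0)
    filter_upwards [h5] with x hx
    exact hx
  have hae0 : ∀ᵐ x ∂ρg, x = 0 := by
    filter_upwards [hae] with x hx
    have h5 : Real.tanh (β * x) = 0 := by
      have := sq_nonneg (Real.tanh (β * x))
      nlinarith [hx]
    have h6 : β * x = 0 := tanh_eq_zero h5
    exact (mul_eq_zero.1 h6).resolve_left hβ.ne'
  calc ρg = Measure.map id ρg := Measure.map_id.symm
    _ = Measure.map (fun _ => (0:ℝ)) ρg := Measure.map_congr (by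
        filter_upwards [hae0] with x hx
        exact hx)
    _ = Measure.dirac 0 := by
        rw [Measure.map_const]
        simp

end
end

section
/- (Hubbard–Stratonovich bound for the coupled entropy.) For every N ∈ ℕ and every 0 ≤ λ₀ < 1, Σ_{σ¹,σ²∈{−1,1}^N} exp( (λ₀/(2N))·( Σ_{i=1}^N σ¹_i σ²_i )² ) ≤ 4^N · (1 − λ₀)^{−1/2}. -/
noncomputable section

open Real MeasureTheory

/-- The spin value (±1) associated to a Boolean. -/
def spin (b : Bool) : ℝ := if b then 1 else -1

lemma gauss_lin_eq (t x : ℝ) :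
    Real.exp (-x ^ 2 / 2 + t * x)
      = Real.exp (t ^ 2 / 2) * Real.exp (-(1 / 2 : ℝ) * (x - t) ^ 2) := by
  rw [← Real.exp_add]; ring_nf

lemma gauss_lin_integrable (t : ℝ) :
    Integrable (fun x : ℝ => Real.exp (-x ^ 2 / 2 + t * x)) := by
  have h := ((integrable_exp_neg_mul_sq (by norm_num : (0:ℝ) < 1/2)).comp_sub_right
      t).const_mul (Real.exp (t ^ 2 / 2))
  exact h.congr (Filter.Eventually.of_forall fun x => (gauss_lin_eq t x).symm)

lemma gauss_lin_integral (t : ℝ) :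
    ∫ x : ℝ, Real.exp (-x ^ 2 / 2 + t * x)
      = Real.sqrt (2 * π) * Real.exp (t ^ 2 / 2) := by
  simp_rw [gauss_lin_eq t]
  rw [MeasureTheory.integral_const_mul,
    show (fun x : ℝ => Real.exp (-(1/2 : ℝ) * (x - t) ^ 2))
      = fun x : ℝ => (fun y : ℝ => Real.exp (-(1/2 : ℝ) * y ^ 2)) (x - t) from rfl,
    integral_sub_right_eq_self (fun y : ℝ => Real.exp (-(1/2 : ℝ) * y ^ 2)) t,
    integral_gaussian]
  rw [show π / (1/2 : ℝ) = 2 * π by ring]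
  ring

/-- **Hubbard–Stratonovich bound for the coupled entropy.**  For every `N` and
`0 ≤ λ₀ < 1`,
`Σ_{σ¹,σ² ∈ {−1,1}^N} exp((λ₀/(2N)) (Σ_i σ¹_i σ²_i)²) ≤ 4^N (1 − λ₀)^{-1/2}`. -/
theorem hubbard_stratonovich_coupled_entropy_bound
    (N : ℕ) (lam0 : ℝ) (h0 : 0 ≤ lam0) (h1 : lam0 < 1) :
    ∑ σ1 : Fin N → Bool, ∑ σ2 : Fin N → Bool,
      Real.exp (lam0 / (2 * (N : ℝ)) * (∑ i : Fin N, spin (σ1 i) * spin (σ2 i)) ^ 2)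
      ≤ (4 : ℝ) ^ N * (1 - lam0) ^ (-(1 / 2) : ℝ) := by
  have h1' : (0:ℝ) < 1 - lam0 := by linarith
  rcases Nat.eq_zero_or_pos N with hN | hN
  · subst hN
    have hsum1 : (∑ σ1 : Fin 0 → Bool, ∑ σ2 : Fin 0 → Bool,
        Real.exp (lam0 / (2 * ((0:ℕ) : ℝ)) *
          (∑ i : Fin 0, spin (σ1 i) * spin (σ2 i)) ^ 2)) = 1 := by
      simp
    rw [hsum1, pow_zero, one_mul]
    exact Real.one_le_rpow_of_pos_of_le_one_of_nonpos h1' (by linarith) (by norm_num)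
  · have hNR : (0:ℝ) < (N:ℝ) := by exact_mod_cast hN
    set c : ℝ := lam0 / N with hc
    have hc0 : 0 ≤ c := div_nonneg h0 hNR.le
    set s : ℝ := Real.sqrt c with hs
    have hs2 : s ^ 2 = c := Real.sq_sqrt hc0
    have hsqrt2pi : (0:ℝ) < Real.sqrt (2 * π) :=
      Real.sqrt_pos.2 (by positivity)
    -- the spin-overlap function
    set S : (Fin N → Bool) → (Fin N → Bool) → ℝ :=
      fun σ1 σ2 => ∑ i : Fin N, spin (σ1 i) * spin (σ2 i) with hS
    -- pointwise Hubbard–Stratonovich identity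
    have key : ∀ σ1 σ2 : Fin N → Bool,
        Real.exp (lam0 / (2 * (N:ℝ)) * (S σ1 σ2) ^ 2)
          = (Real.sqrt (2 * π))⁻¹ *
            ∫ x : ℝ, Real.exp (-x ^ 2 / 2 + (s * S σ1 σ2) * x) := by
      intro σ1 σ2
      rw [gauss_lin_integral, ← mul_assoc, inv_mul_cancel₀ hsqrt2pi.ne', one_mul]
      have : (s * S σ1 σ2) ^ 2 / 2 = lam0 / (2 * (N:ℝ)) * (S σ1 σ2) ^ 2 := by
        rw [mul_pow, hs2, hc, div_mul_eq_mul_div, div_div, div_mul_eq_mul_div,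
          mul_comm (N:ℝ) 2]
      rw [this]
    -- rewrite as a single sum over pairs and swap sum and integral
    have step1 :
        (∑ σ1 : Fin N → Bool, ∑ σ2 : Fin N → Bool,
          Real.exp (lam0 / (2 * (N:ℝ)) * (S σ1 σ2) ^ 2))
        = (Real.sqrt (2 * π))⁻¹ *
          ∫ x : ℝ, ∑ p : (Fin N → Bool) × (Fin N → Bool),
            Real.exp (-x ^ 2 / 2 + (s * S p.1 p.2) * x) := by
      rw [MeasureTheory.integral_finset_sum _ fun p _ => gauss_lin_integrable _,
        Finset.mul_sum, Fintype.sum_prod_type]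
      exact Finset.sum_congr rfl fun σ1 _ => Finset.sum_congr rfl fun σ2 _ => key σ1 σ2
    -- compute the inner sum as a product (factorization over sites)
    have factor : ∀ x : ℝ,
        (∑ p : (Fin N → Bool) × (Fin N → Bool),
          Real.exp (-x ^ 2 / 2 + (s * S p.1 p.2) * x))
        = Real.exp (-x ^ 2 / 2) *
          (∑ b : Bool × Bool, Real.exp (s * x * (spin b.1 * spin b.2))) ^ N := by
      intro x
      have e1 : ∀ p : (Fin N → Bool) × (Fin N → Bool),
          Real.exp (-x ^ 2 / 2 + (s * S p.1 p.2) * x)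
            = Real.exp (-x ^ 2 / 2) *
              ∏ i : Fin N, Real.exp (s * x * (spin (p.1 i) * spin (p.2 i))) := by
        intro p
        have hsum : s * S p.1 p.2 * x
            = ∑ i : Fin N, s * x * (spin (p.1 i) * spin (p.2 i)) := by
          simp only [hS, Finset.mul_sum, Finset.sum_mul]
          exact Finset.sum_congr rfl fun i _ => by ring
        rw [Real.exp_add, hsum, Real.exp_sum]
      simp_rw [e1, ← Finset.mul_sum]
      congr 1
      rw [Finset.sum_pow' Finset.univ
        (fun b : Bool × Bool => Real.exp (s * x * (spin b.1 * spin b.2))) N]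
      rw [Fintype.piFinset_univ]
      exact Fintype.sum_equiv (Equiv.arrowProdEquivProdArrow (Fin N) (fun _ => Bool) (fun _ => Bool)).symm _ _
        (fun q => rfl)
    -- evaluate the Bool × Bool sum as 4 cosh
    have boolsum : ∀ y : ℝ,
        (∑ b : Bool × Bool, Real.exp (y * (spin b.1 * spin b.2)))
          = 4 * Real.cosh y := by
      intro y
      rw [Real.cosh_eq]
      simp [Fintype.sum_prod_type, spin]
      ring
    -- pointwise bound of the integrand
    have bound : ∀ x : ℝ,
        (∑ p : (Fin N → Bool) × (Fin N → Bool),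
          Real.exp (-x ^ 2 / 2 + (s * S p.1 p.2) * x))
        ≤ (4:ℝ) ^ N * Real.exp (-((1 - lam0) / 2) * x ^ 2) := by
      intro x
      rw [factor x, boolsum (s * x)]
      have hcosh : 4 * Real.cosh (s * x) ≤ 4 * Real.exp ((s * x) ^ 2 / 2) := by
        nlinarith [Real.cosh_le_exp_half_sq (s * x)]
      have h4 : (4 * Real.cosh (s * x)) ^ N ≤ (4 * Real.exp ((s * x) ^ 2 / 2)) ^ N := by
        apply pow_le_pow_left₀ (by positivity) hcosh
      calc Real.exp (-x ^ 2 / 2) * (4 * Real.cosh (s * x)) ^ N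
          ≤ Real.exp (-x ^ 2 / 2) * (4 * Real.exp ((s * x) ^ 2 / 2)) ^ N :=
            mul_le_mul_of_nonneg_left h4 (Real.exp_nonneg _)
        _ = (4:ℝ) ^ N * Real.exp (-((1 - lam0) / 2) * x ^ 2) := by
            rw [mul_pow, ← Real.exp_nat_mul]
            rw [← mul_assoc, mul_comm (Real.exp (-x^2/2)) ((4:ℝ)^N), mul_assoc,
              ← Real.exp_add]
            congr 2
            have : (N:ℝ) * ((s * x) ^ 2 / 2) = lam0 * x ^ 2 / 2 := by
              rw [mul_pow, hs2, hc]
              field_simp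
            rw [this]
            ring
    -- integrate the bound
    have int_lhs : Integrable (fun x : ℝ => ∑ p : (Fin N → Bool) × (Fin N → Bool),
        Real.exp (-x ^ 2 / 2 + (s * S p.1 p.2) * x)) :=
      MeasureTheory.integrable_finset_sum _ fun p _ => gauss_lin_integrable _
    have int_rhs : Integrable (fun x : ℝ => (4:ℝ) ^ N *
        Real.exp (-((1 - lam0) / 2) * x ^ 2)) :=
      (integrable_exp_neg_mul_sq (by linarith : (0:ℝ) < (1 - lam0)/2)).const_mul _
    have intle : (∫ x : ℝ, ∑ p : (Fin N → Bool) × (Fin N → Bool),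
          Real.exp (-x ^ 2 / 2 + (s * S p.1 p.2) * x))
        ≤ ∫ x : ℝ, (4:ℝ) ^ N * Real.exp (-((1 - lam0) / 2) * x ^ 2) :=
      MeasureTheory.integral_mono int_lhs int_rhs bound
    have intval : (∫ x : ℝ, (4:ℝ) ^ N * Real.exp (-((1 - lam0) / 2) * x ^ 2))
        = (4:ℝ) ^ N * Real.sqrt (π / ((1 - lam0) / 2)) := by
      rw [MeasureTheory.integral_const_mul, integral_gaussian]
    -- put everything together
    rw [step1]
    calc (Real.sqrt (2 * π))⁻¹ *
          ∫ x : ℝ, ∑ p : (Fin N → Bool) × (Fin N → Bool),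
            Real.exp (-x ^ 2 / 2 + (s * S p.1 p.2) * x)
        ≤ (Real.sqrt (2 * π))⁻¹ * ((4:ℝ) ^ N * Real.sqrt (π / ((1 - lam0) / 2))) := by
          apply mul_le_mul_of_nonneg_left _ (inv_nonneg.2 hsqrt2pi.le)
          rw [← intval]; exact intle
      _ = (4:ℝ) ^ N * (1 - lam0) ^ (-(1 / 2) : ℝ) := by
          have hsl : Real.sqrt (1 - lam0) ≠ 0 := (Real.sqrt_pos.2 h1').ne'
          have hπ : π / ((1 - lam0) / 2) = 2 * π / (1 - lam0) := by
            rw [div_div_eq_mul_div]; ring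
          rw [hπ, Real.sqrt_div (by positivity : (0:ℝ) ≤ 2 * π) (1 - lam0),
            Real.rpow_neg h1'.le, ← Real.sqrt_eq_rpow]
          field_simp

end
end
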